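/- arXiv:1812.04142 — 2 statements merged into one kernel-verified Lean document; each statement's English description precedes it below -/
import Mathlib

section
/- Let α = (α₁,…,α_N) be N distinct elements of F_q, and let K, T ≥ 1. Then the coordinatewise (star) product of the Reed-Solomon codes RS_K(α) and RS_T(α), defined as the F_q-span of {c⋆d : c ∈ RS_K(α), d ∈ RS_T(α)} where (c⋆d)_n = c_n d_n, equals RS_{min{K+T−1, N}}(α). -/
/-- The Reed-Solomon code of length `N` and dimension `K` with evaluation points `α`:
evaluations at `α` of polynomials of degree at most `K - 1`. -/
def RS (F : Type*) [Field F] (N K : ℕ) (α : Fin N → F) : Set (Fin N → F) :=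
  {y | ∃ φ : Polynomial F, φ.degree < K ∧ y = fun n => φ.eval (α n)}

/-- Evaluation at the points `α` as a linear map. -/
noncomputable def evalLM (F : Type*) [Field F] (N : ℕ) (α : Fin N → F) :
    Polynomial F →ₗ[F] (Fin N → F) :=
  LinearMap.pi (fun n => Polynomial.leval (α n))

lemma evalLM_apply (F : Type*) [Field F] (N : ℕ) (α : Fin N → F) (φ : Polynomial F) :
    evalLM F N α φ = fun n => φ.eval (α n) := rfl

/-- `RS` is closed under addition and scalar multiplication. -/
lemma RS_submodule (F : Type*) [Field F] (N M : ℕ) (α : Fin N → F) :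
    RS F N M α = (Submodule.map (evalLM F N α) (Polynomial.degreeLT F M) :
      Submodule F (Fin N → F)) := by
  ext y
  simp only [RS, Set.mem_setOf_eq, SetLike.mem_coe, Submodule.mem_map,
    Polynomial.mem_degreeLT, evalLM_apply]
  constructor
  · rintro ⟨φ, h, rfl⟩; exact ⟨φ, h, rfl⟩
  · rintro ⟨φ, h, rfl⟩; exact ⟨φ, h, rfl⟩

lemma degree_mul_lt_helper {F : Type*} [Field F] {K T : ℕ} (hK : 1 ≤ K) (hT : 1 ≤ T)
    {φ ψ : Polynomial F} (hφ : φ.degree < (K : WithBot ℕ)) (hψ : ψ.degree < (T : WithBot ℕ)) :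
    (φ * ψ).degree < ((K + T - 1 : ℕ) : WithBot ℕ) := by
  rcases eq_or_ne φ 0 with rfl | hφ0
  · rw [zero_mul, Polynomial.degree_zero]; exact WithBot.bot_lt_coe _
  rcases eq_or_ne ψ 0 with rfl | hψ0
  · rw [mul_zero, Polynomial.degree_zero]; exact WithBot.bot_lt_coe _
  rw [← Polynomial.natDegree_lt_iff_degree_lt (mul_ne_zero hφ0 hψ0)]
  rw [← Polynomial.natDegree_lt_iff_degree_lt hφ0] at hφ
  rw [← Polynomial.natDegree_lt_iff_degree_lt hψ0] at hψ
  have := Polynomial.natDegree_mul_le (p := φ) (q := ψ)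
  omega

theorem stmt1 (F : Type*) [Field F] (N K T : ℕ) (hK : 1 ≤ K) (hT : 1 ≤ T)
    (α : Fin N → F) (hα : Function.Injective α) :
    (Submodule.span F {x : Fin N → F | ∃ c ∈ RS F N K α, ∃ d ∈ RS F N T α, x = c * d} :
        Set (Fin N → F)) = RS F N (min (K + T - 1) N) α := by
  have hKT : 1 ≤ K + T - 1 := by omega
  -- everything is in RS N
  have hRSN : ∀ y : Fin N → F, y ∈ RS F N N α := by
    intro y
    classical
    refine ⟨Lagrange.interpolate Finset.univ α y, ?_, ?_⟩
    · have := Lagrange.degree_interpolate_lt (s := Finset.univ) (v := α) y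
        (Function.Injective.injOn hα)
      simpa only [Finset.card_univ, Fintype.card_fin] using this
    · funext n
      rw [Lagrange.eval_interpolate_at_node y (Function.Injective.injOn hα)
        (Finset.mem_univ n)]
  rw [RS_submodule F N (min (K + T - 1) N) α, SetLike.coe_set_eq]
  apply le_antisymm
  · -- span ⊆ RS min
    rw [Submodule.span_le]
    rintro x ⟨c, ⟨φ, hφ, rfl⟩, d, ⟨ψ, hψ, rfl⟩, rfl⟩
    rcases le_or_gt (K + T - 1) N with hle | hlt
    · rw [min_eq_left hle]
      refine Submodule.mem_map.mpr
        ⟨φ * ψ, Polynomial.mem_degreeLT.mpr (degree_mul_lt_helper hK hT hφ hψ), ?_⟩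
      funext n
      simp [evalLM_apply]
    · rw [min_eq_right hlt.le]
      have := hRSN ((fun n => φ.eval (α n)) * fun n => ψ.eval (α n))
      rw [RS_submodule F N N α] at this
      exact this
  · -- RS min ⊆ span
    rintro y hy
    obtain ⟨φ, hφ, rfl⟩ := Submodule.mem_map.mp hy
    rw [Polynomial.mem_degreeLT] at hφ
    have hdeg : φ.natDegree < K + T - 1 := by
      rcases eq_or_ne φ 0 with rfl | h0
      · simp only [Polynomial.natDegree_zero]; omega
      · rw [Polynomial.natDegree_lt_iff_degree_lt h0]
        exact lt_of_lt_of_le hφ (by exact_mod_cast Nat.cast_le.mpr (min_le_left _ _))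
    have hsum := Polynomial.as_sum_range' φ (K + T - 1) hdeg
    rw [show evalLM F N α φ =
        ∑ i ∈ Finset.range (K + T - 1), φ.coeff i • evalLM F N α (Polynomial.X ^ i) by
      conv_lhs => rw [hsum]
      rw [map_sum]
      refine Finset.sum_congr rfl fun i _ => ?_
      rw [← map_smul]
      congr 1
      rw [Polynomial.smul_X_eq_monomial]]
    apply Submodule.sum_mem
    intro i hi
    apply Submodule.smul_mem
    apply Submodule.subset_span
    rw [Finset.mem_range] at hi
    refine ⟨evalLM F N α (Polynomial.X ^ (min i (K - 1))),
      ⟨Polynomial.X ^ (min i (K - 1)), ?_, (evalLM_apply ..)⟩,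
      evalLM F N α (Polynomial.X ^ (i - min i (K - 1))),
      ⟨Polynomial.X ^ (i - min i (K - 1)), ?_, (evalLM_apply ..)⟩, ?_⟩
    · rw [Polynomial.degree_X_pow]
      exact_mod_cast Nat.lt_of_le_of_lt (min_le_right _ _) (by omega)
    · rw [Polynomial.degree_X_pow]
      have : i - min i (K - 1) < T := by omega
      exact_mod_cast this
    · funext n
      simp only [evalLM_apply, Pi.mul_apply, Polynomial.eval_pow, Polynomial.eval_X]
      rw [← pow_add]
      congr 1
      omega
end

section
/- Let β₁,…,β_{K+E} be distinct elements of F_q and let x₁,…,x_K ∈ F_q^M be fixed vectors and t₁,…,t_E ∈ F_q^M be i.i.d. uniform random vectors. Let u_X(z) be the unique vector of polynomials of degree ≤ K+E−1 with u_X(β_k)=x_k for k∈[K] and u_X(β_{K+e})=t_e for e∈[E]. Let α_{n₁},…,α_{n_E} be distinct elements of F_q not in {β₁,…,β_K}. Then the joint distribution of (u_X(α_{n₁}),…,u_X(α_{n_E})) is independent of (x₁,…,x_K). -/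
noncomputable def corrPoly {F : Type*} [Field F] {K E : ℕ}
    (β : Fin K ⊕ Fin E → F) (αE : Fin E → F) (d : Fin K → F) : Polynomial F :=
  Lagrange.interpolate Finset.univ (Sum.elim (fun k => β (Sum.inl k)) αE)
    (Sum.elim d (fun _ => 0))

set_option maxHeartbeats 1000000 in
theorem stmt5 (F : Type*) [Field F] [Fintype F] (M K E : ℕ)
    (β : Fin K ⊕ Fin E → F) (hβ : Function.Injective β)
    (αE : Fin E → F) (hαE : Function.Injective αE)
    (hdisj : ∀ j (k : Fin K), αE j ≠ β (Sum.inl k))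
    (x x' : Fin K → Fin M → F) (w : Fin E → Fin M → F) :
    Nat.card {t : Fin E → Fin M → F //
        ∀ j m, (Lagrange.interpolate Finset.univ β
          (Sum.elim (fun k => x k m) (fun e => t e m))).eval (αE j) = w j m} =
      Nat.card {t : Fin E → Fin M → F //
        ∀ j m, (Lagrange.interpolate Finset.univ β
          (Sum.elim (fun k => x' k m) (fun e => t e m))).eval (αE j) = w j m} := by
  classical
  have hγ : Function.Injective (Sum.elim (fun k => β (Sum.inl k)) αE) := by
    intro a b hab
    rcases a with a | a <;> rcases b with b | b <;> simp only [Sum.elim_inl, Sum.elim_inr] at hab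
    · exact congrArg Sum.inl (Sum.inl.inj (hβ hab))
    · exact absurd hab.symm (hdisj b a)
    · exact absurd hab (hdisj a b)
    · exact congrArg Sum.inr (hαE hab)
  have hγs : Set.InjOn (Sum.elim (fun k => β (Sum.inl k)) αE)
      (Finset.univ : Finset (Fin K ⊕ Fin E)) := hγ.injOn
  have hβs : Set.InjOn β (Finset.univ : Finset (Fin K ⊕ Fin E)) := hβ.injOn
  -- evaluations of the correction polynomial at nodes
  have hCinl : ∀ (d : Fin K → F) (k : Fin K),
      (corrPoly β αE d).eval (β (Sum.inl k)) = d k :=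
    fun d k => Lagrange.eval_interpolate_at_node (v := Sum.elim (fun k => β (Sum.inl k)) αE) (i := Sum.inl k) (Sum.elim d (fun _ => 0)) hγs (Finset.mem_univ (Sum.inl k))
  have hC0 : ∀ (d : Fin K → F) (j : Fin E),
      (corrPoly β αE d).eval (αE j) = 0 :=
    fun d j => Lagrange.eval_interpolate_at_node (v := Sum.elim (fun k => β (Sum.inl k)) αE) (i := Sum.inr j) (Sum.elim d (fun _ => 0)) hγs (Finset.mem_univ (Sum.inr j))
  set δ : Fin E → Fin M → F := fun e m =>
    (corrPoly β αE (fun k => x k m - x' k m)).eval (β (Sum.inr e)) with hδdef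
  have key : ∀ (t : Fin E → Fin M → F) (m : Fin M),
      Lagrange.interpolate Finset.univ β
        (Sum.elim (fun k => x' k m) (fun e => t e m - δ e m)) =
      Lagrange.interpolate Finset.univ β
        (Sum.elim (fun k => x k m) (fun e => t e m)) -
        corrPoly β αE (fun k => x k m - x' k m) := by
    intro t m
    symm
    apply Lagrange.eq_interpolate_of_eval_eq _ hβs
    · apply lt_of_le_of_lt (Polynomial.degree_sub_le _ _)
      apply max_lt
      · exact Lagrange.degree_interpolate_lt _ hβs
      · exact Lagrange.degree_interpolate_lt _ hγs
    · intro i _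
      rcases i with k | e
      · have h1 := Lagrange.eval_interpolate_at_node
          (Sum.elim (fun k => x k m) (fun e => t e m)) hβs
          (Finset.mem_univ (Sum.inl k))
        rw [Polynomial.eval_sub, h1, hCinl]
        simp only [Sum.elim_inl]
        ring
      · have h1 := Lagrange.eval_interpolate_at_node
          (Sum.elim (fun k => x k m) (fun e => t e m)) hβs
          (Finset.mem_univ (Sum.inr e))
        rw [Polynomial.eval_sub, h1]
        simp only [Sum.elim_inr, hδdef]
  refine Nat.card_congr (Equiv.subtypeEquiv (Equiv.subRight δ) ?_)
  intro t
  have hEq : ∀ j m,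
      (Lagrange.interpolate Finset.univ β
        (Sum.elim (fun k => x' k m) (fun e => (Equiv.subRight δ t) e m))).eval (αE j) =
      (Lagrange.interpolate Finset.univ β
        (Sum.elim (fun k => x k m) (fun e => t e m))).eval (αE j) := by
    intro j m
    have : (Lagrange.interpolate Finset.univ β
        (Sum.elim (fun k => x' k m) (fun e => t e m - δ e m))) =
        Lagrange.interpolate Finset.univ β
          (Sum.elim (fun k => x k m) (fun e => t e m)) -
          corrPoly β αE (fun k => x k m - x' k m) := key t m
    rw [show ((Equiv.subRight δ t) : Fin E → Fin M → F) = t - δ from rfl]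
    simp only [Pi.sub_apply]
    rw [this, Polynomial.eval_sub, hC0, sub_zero]
  constructor
  · intro h j m
    rw [hEq j m]
    exact h j m
  · intro h j m
    rw [← hEq j m]
    exact h j m
end
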